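/- Let $a > 0$, $b \in \mathbb{R}$, $\tau = b+ia$. Then $\sum_{m,n \in \mathbb{Z}} (-1)^{mn} e^{-\frac{\pi}{2a}(m+n\tau)(m+n\bar\tau)} e^{-\frac{\pi}{a}(m+n\bar\tau)z} e^{-\frac{\pi}{2a}z^2} = \sqrt{2a}\, \Big(\sum_{l\in\mathbb{Z}} e^{-\pi i \bar\tau l^2}\Big)\Big(\sum_{k\in\mathbb{Z}} e^{\pi i \tau k^2} e^{2\pi i k z}\Big)$ for all $z \in \mathbb{C}$. -/

import Mathlib

/-- The Gaussian double-sum term for the degree-1 theta formula. -/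
noncomputable def degOneThetaTerm (a : ℝ) (τ z : ℂ) (m n : ℤ) : ℂ :=
  (-1 : ℂ) ^ (m * n) *
  Complex.exp (-((Real.pi : ℂ) / (2 * (a : ℂ))) *
      (((m : ℂ) + (n : ℂ) * τ) * ((m : ℂ) + (n : ℂ) * (starRingEnd ℂ) τ))) *
  Complex.exp (-((Real.pi : ℂ) / (a : ℂ)) * ((m : ℂ) + (n : ℂ) * (starRingEnd ℂ) τ) * z) *
  Complex.exp (-((Real.pi : ℂ) / (2 * (a : ℂ))) * z ^ 2)

open Complex Real
open scoped Real

namespace DegOneTheta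

lemma summable_gauss_bound (α S : ℝ) (hα : 0 < α) :
    Summable fun m : ℤ => rexp (-(α * (m : ℝ) ^ 2) + S * |(m : ℝ)|) := by
  have h := summable_pow_mul_jacobiTheta₂_term_bound (S / (2 * π)) (T := α / π)
    (by positivity) 0
  refine h.congr fun m => ?_
  rw [pow_zero, one_mul]
  congr 1
  field_simp
  push_cast
  ring

lemma gauss_key (α : ℝ) (hα : 0 < α) {s : ℝ} (hs0 : 0 ≤ s) (hs1 : s ≤ 1) (m : ℤ) :
    rexp (-(α * ((m : ℝ) + s) ^ 2)) ≤ rexp (-(α * (m : ℝ) ^ 2) + 2 * α * |(m : ℝ)|) := by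
  rw [Real.exp_le_exp]
  have h3 : -|(m : ℝ)| ≤ (m : ℝ) := neg_abs_le _
  have h5 : 0 ≤ |(m : ℝ)| := abs_nonneg _
  nlinarith [sq_nonneg s, mul_le_mul_of_nonneg_right h3 hs0,
    mul_le_of_le_one_right h5 hs1]

lemma summable_gauss_fract (α : ℝ) (hα : 0 < α) (t : ℝ) :
    Summable fun m : ℤ => rexp (-(α * ((m : ℝ) + Int.fract t) ^ 2)) :=
  (summable_gauss_bound α (2 * α) hα).of_nonneg_of_le
    (fun m => (Real.exp_pos _).le)
    (fun m => gauss_key α hα (Int.fract_nonneg t) (Int.fract_lt_one t).le m)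

lemma shift_eq {α : ℝ} (t : ℝ) (m : ℤ) :
    rexp (-(α * (((m + ⌊t⌋ : ℤ) : ℝ) + Int.fract t) ^ 2)) = rexp (-(α * ((m : ℝ) + t) ^ 2)) := by
  congr 3
  rw [Int.fract]
  push_cast
  ring

lemma summable_gauss_shift (α : ℝ) (hα : 0 < α) (t : ℝ) :
    Summable fun m : ℤ => rexp (-(α * ((m : ℝ) + t) ^ 2)) := by
  have h := (summable_gauss_fract α hα t).comp_injective (add_left_injective ⌊t⌋)
  exact h.congr fun m => shift_eq t m

lemma tsum_gauss_shift_le (α : ℝ) (hα : 0 < α) (t : ℝ) :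
    ∑' m : ℤ, rexp (-(α * ((m : ℝ) + t) ^ 2))
      ≤ ∑' m : ℤ, rexp (-(α * (m : ℝ) ^ 2) + 2 * α * |(m : ℝ)|) := by
  have e1 : ∑' m : ℤ, rexp (-(α * ((m : ℝ) + t) ^ 2))
      = ∑' m : ℤ, rexp (-(α * ((m : ℝ) + Int.fract t) ^ 2)) := by
    rw [← (Equiv.addRight (⌊t⌋ : ℤ)).tsum_eq
      (f := fun m : ℤ => rexp (-(α * ((m : ℝ) + Int.fract t) ^ 2)))]
    exact tsum_congr fun m => (shift_eq t m).symm
  rw [e1]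
  exact Summable.tsum_le_tsum (fun m => gauss_key α hα (Int.fract_nonneg t) (Int.fract_lt_one t).le m)
    (summable_gauss_fract α hα t) (summable_gauss_bound α (2 * α) hα)

lemma summable2D (α β c γ δ : ℝ) (hα : 0 < α) (hβ : 0 < β) :
    Summable fun p : ℤ × ℤ =>
      rexp (-(α * ((p.2 : ℝ) + c * (p.1 : ℝ) + γ) ^ 2) - β * (p.1 : ℝ) ^ 2 + δ * (p.1 : ℝ)) := by
  rw [summable_prod_of_nonneg (fun p => (Real.exp_pos _).le)]
  constructor
  · intro n
    have h := (summable_gauss_shift α hα (c * (n : ℝ) + γ)).mul_left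
      (rexp (-β * (n : ℝ) ^ 2 + δ * (n : ℝ)))
    refine h.congr fun m => ?_
    rw [← Real.exp_add]
    congr 1
    ring
  · set C := ∑' m : ℤ, rexp (-(α * (m : ℝ) ^ 2) + 2 * α * |(m : ℝ)|) with hC
    have hC0 : 0 ≤ C := tsum_nonneg fun m => (Real.exp_pos _).le
    have hbig : Summable fun n : ℤ => rexp (-(β * (n : ℝ) ^ 2) + |δ| * |(n : ℝ)|) * C :=
      (summable_gauss_bound β |δ| hβ).mul_right C
    refine hbig.of_nonneg_of_le (fun n => tsum_nonneg fun m => (Real.exp_pos _).le)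
      (fun n => ?_)
    calc ∑' m : ℤ, rexp (-(α * ((m : ℝ) + c * (n : ℝ) + γ) ^ 2) - β * (n : ℝ) ^ 2 + δ * (n : ℝ))
        = rexp (-β * (n : ℝ) ^ 2 + δ * (n : ℝ)) *
            ∑' m : ℤ, rexp (-(α * ((m : ℝ) + (c * n + γ)) ^ 2)) := by
          rw [← tsum_mul_left]
          exact tsum_congr fun m => by rw [← Real.exp_add]; congr 1; ring
      _ ≤ rexp (-β * (n : ℝ) ^ 2 + δ * (n : ℝ)) * C :=
          mul_le_mul_of_nonneg_left (tsum_gauss_shift_le α hα _) (Real.exp_pos _).le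
      _ ≤ rexp (-(β * (n : ℝ) ^ 2) + |δ| * |(n : ℝ)|) * C := by
          refine mul_le_mul_of_nonneg_right ?_ hC0
          rw [Real.exp_le_exp]
          have h2 : δ * (n : ℝ) ≤ |δ| * |(n : ℝ)| := by
            calc δ * (n : ℝ) ≤ |δ * (n : ℝ)| := le_abs_self _
              _ = |δ| * |(n : ℝ)| := abs_mul _ _
          linarith

noncomputable def Baux (a b : ℝ) (z : ℂ) (n : ℤ) : ℂ :=
  ((2⁻¹ : ℝ) : ℂ) * I * n - (((2 * a)⁻¹ : ℝ) : ℂ) * ((b : ℂ) * n + z)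

noncomputable def Caux (a b : ℝ) (z : ℂ) (n : ℤ) : ℂ :=
  ((π : ℝ) : ℂ) * I * n * z - ((π * a / 2 : ℝ) : ℂ) * n ^ 2
    - ((π * (2 * a)⁻¹ : ℝ) : ℂ) * ((b : ℂ) * n + z) ^ 2

noncomputable def Gaux (a b : ℝ) (z : ℂ) (n k : ℤ) : ℂ :=
  -(((π * b : ℝ) : ℂ) * I * n ^ 2) - ((π * a : ℝ) : ℂ) * n ^ 2
    + ((2 * π * a : ℝ) : ℂ) * k * n - ((2 * π * a : ℝ) : ℂ) * k ^ 2
    + ((2 * π : ℝ) : ℂ) * I * k * ((b : ℂ) * n + z)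

lemma term_eq (a b : ℝ) (ha : a ≠ 0) (z : ℂ) (m n : ℤ) :
    degOneThetaTerm a ((b : ℂ) + (a : ℂ) * I) z m n
      = cexp (-(π : ℂ) * (((2 * a)⁻¹ : ℝ) : ℂ) * m ^ 2 + 2 * π * Baux a b z n * m)
        * cexp (Caux a b z n) := by
  have hconj : (starRingEnd ℂ) ((b : ℂ) + (a : ℂ) * I) = (b : ℂ) - (a : ℂ) * I := by
    simp [Complex.ext_iff]
  have hpow : ((-1 : ℂ)) ^ (m * n) = cexp (((m * n : ℤ) : ℂ) * ((π : ℂ) * I)) := by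
    rw [Complex.exp_int_mul, Complex.exp_pi_mul_I]
  rw [degOneThetaTerm, hconj, hpow, ← Complex.exp_add, ← Complex.exp_add, ← Complex.exp_add,
    ← Complex.exp_add]
  congr 1
  rw [Baux, Caux]
  have haC : (a : ℂ) ≠ 0 := by exact_mod_cast ha
  push_cast
  field_simp
  ring_nf
  simp_rw [Complex.I_sq]
  ring

lemma exponent_C (a b : ℝ) (ha : a ≠ 0) (z : ℂ) (n k : ℤ) :
    Caux a b z n + (-(π : ℂ) / (((2 * a)⁻¹ : ℝ) : ℂ)) * ((k : ℂ) + I * Baux a b z n) ^ 2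
      = Gaux a b z n k := by
  have haC : (a : ℂ) ≠ 0 := by exact_mod_cast ha
  have hI3 : I ^ 3 = -I := by rw [pow_succ, Complex.I_sq]; ring
  have hI4 : I ^ 4 = 1 := by rw [pow_succ, hI3]; simp
  rw [Caux, Baux, Gaux]
  push_cast
  field_simp
  ring_nf
  simp_rw [Complex.I_sq, hI3, hI4]
  ring_nf

lemma shear_eq (a b : ℝ) (z : ℂ) (l k : ℤ) :
    cexp (Gaux a b z (l + k) k)
      = cexp (-((π : ℝ) * I * (starRingEnd ℂ) ((b : ℂ) + (a : ℂ) * I) * (l : ℂ) ^ 2))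
        * (cexp ((π : ℝ) * I * ((b : ℂ) + (a : ℂ) * I) * (k : ℂ) ^ 2)
            * cexp (2 * (π : ℝ) * I * (k : ℂ) * z)) := by
  have hconj : (starRingEnd ℂ) ((b : ℂ) + (a : ℂ) * I) = (b : ℂ) - (a : ℂ) * I := by
    simp [Complex.ext_iff]
  rw [hconj, ← Complex.exp_add, ← Complex.exp_add, Gaux]
  congr 1
  push_cast
  ring_nf
  simp_rw [Complex.I_sq]
  ring

lemma sqrt_fact (a : ℝ) (ha : 0 < a) :
    1 / ((((2 * a)⁻¹ : ℝ) : ℂ) ^ (1 / 2 : ℂ)) = ((Real.sqrt (2 * a) : ℝ) : ℂ) := by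
  rw [show (1 / 2 : ℂ) = ((1 / 2 : ℝ) : ℂ) by norm_num,
    ← Complex.ofReal_cpow (by positivity)]
  rw [show ((2 * a)⁻¹ ^ (1 / 2 : ℝ)) = (Real.sqrt (2 * a))⁻¹ by
    rw [Real.inv_rpow (by positivity), ← Real.sqrt_eq_rpow]]
  rw [Complex.ofReal_inv, one_div, inv_inv]

lemma norm_term (a b : ℝ) (z : ℂ) (m n : ℤ) :
    ‖cexp (-(π : ℂ) * (((2 * a)⁻¹ : ℝ) : ℂ) * (m : ℂ) ^ 2 + 2 * π * Baux a b z n * m)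
        * cexp (Caux a b z n)‖
      = rexp (-(π * (2 * a)⁻¹ * ((m : ℝ) + b * (n : ℝ) + z.re) ^ 2)
            - π * a / 2 * (n : ℝ) ^ 2 + (-(π * z.im)) * (n : ℝ))
          * rexp (π * (2 * a)⁻¹ * z.im ^ 2) := by
  rw [norm_mul, Complex.norm_exp, Complex.norm_exp,
    ← Real.exp_add, ← Real.exp_add]
  congr 1
  simp only [Baux, Caux, pow_two, Complex.add_re, Complex.add_im, Complex.sub_re, Complex.sub_im,
    Complex.neg_re, Complex.neg_im, Complex.mul_re, Complex.mul_im, Complex.I_re, Complex.I_im,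
    Complex.ofReal_re, Complex.ofReal_im, Complex.intCast_re, Complex.intCast_im,
    Complex.re_ofNat, Complex.im_ofNat, Complex.one_re, Complex.one_im]
  ring

lemma norm_G (a b : ℝ) (ha : a ≠ 0) (z : ℂ) (n k : ℤ) :
    ‖cexp (Gaux a b z n k)‖
      = rexp (-(2 * π * a * ((k : ℝ) + (-(2 : ℝ))⁻¹ * (n : ℝ) + z.im * (2 * a)⁻¹) ^ 2)
            - π * a / 2 * (n : ℝ) ^ 2 + (-(π * z.im)) * (n : ℝ))
          * rexp (π * (2 * a)⁻¹ * z.im ^ 2) := by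
  rw [Complex.norm_exp, ← Real.exp_add]
  congr 1
  simp only [Gaux, pow_two, Complex.add_re, Complex.add_im, Complex.sub_re, Complex.sub_im,
    Complex.neg_re, Complex.neg_im, Complex.mul_re, Complex.mul_im, Complex.I_re, Complex.I_im,
    Complex.ofReal_re, Complex.ofReal_im, Complex.intCast_re, Complex.intCast_im,
    Complex.re_ofNat, Complex.im_ofNat, Complex.one_re, Complex.one_im]
  field_simp
  ring

lemma summable_norm_A (a b : ℝ) (ha : 0 < a) :
    Summable fun l : ℤ =>
      ‖cexp (-((π : ℝ) * I * (starRingEnd ℂ) ((b : ℂ) + (a : ℂ) * I) * (l : ℂ) ^ 2))‖ := by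
  have hconj : (starRingEnd ℂ) ((b : ℂ) + (a : ℂ) * I) = (b : ℂ) - (a : ℂ) * I := by
    simp [Complex.ext_iff]
  refine (summable_gauss_bound (π * a) 0 (by positivity)).congr fun l => ?_
  rw [hconj, Complex.norm_exp]
  congr 1
  simp only [pow_two, Complex.add_re, Complex.add_im, Complex.sub_re, Complex.sub_im,
    Complex.neg_re, Complex.neg_im, Complex.mul_re, Complex.mul_im, Complex.I_re, Complex.I_im,
    Complex.ofReal_re, Complex.ofReal_im, Complex.intCast_re, Complex.intCast_im]
  ring

lemma summable_norm_B (a b : ℝ) (ha : 0 < a) (z : ℂ) :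
    Summable fun k : ℤ =>
      ‖cexp ((π : ℝ) * I * ((b : ℂ) + (a : ℂ) * I) * (k : ℂ) ^ 2)
        * cexp (2 * (π : ℝ) * I * (k : ℂ) * z)‖ := by
  refine (summable_gauss_bound (π * a) (2 * π * |z.im|) (by positivity)).of_nonneg_of_le
    (fun k => norm_nonneg _) (fun k => ?_)
  rw [norm_mul, Complex.norm_exp, Complex.norm_exp,
    ← Real.exp_add, Real.exp_le_exp]
  have heq : ((π : ℝ) * I * ((b : ℂ) + (a : ℂ) * I) * (k : ℂ) ^ 2).re
      + (2 * (π : ℝ) * I * (k : ℂ) * z).re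
      = -(π * a * (k : ℝ) ^ 2) - 2 * π * z.im * (k : ℝ) := by
    simp only [pow_two, Complex.add_re, Complex.add_im, Complex.mul_re, Complex.mul_im,
      Complex.I_re, Complex.I_im, Complex.ofReal_re, Complex.ofReal_im,
      Complex.intCast_re, Complex.intCast_im, Complex.re_ofNat, Complex.im_ofNat]
    ring
  rw [heq]
  have h1 : -(z.im * (k : ℝ)) ≤ |z.im| * |(k : ℝ)| := by
    rw [← abs_mul]; exact neg_le_abs _
  nlinarith [Real.pi_pos]

end DegOneTheta

open DegOneTheta


/-- the theta identity
`∑_{m,n} (-1)^{mn} e^{-(π/2a)(m+nτ)(m+nτ̄)} e^{-(π/a)(m+nτ̄)z} e^{-(π/2a)z²}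
  = √(2a) · (∑_l e^{-πiτ̄l²}) · (∑_k e^{πiτk²} e^{2πikz})`. -/
theorem degree_one_theta_identity
    (a b : ℝ) (ha : 0 < a) (τ : ℂ) (hτ : τ = (b : ℂ) + (a : ℂ) * Complex.I)
    (z : ℂ) :
    (∑' p : ℤ × ℤ, degOneThetaTerm a τ z p.1 p.2)
      = (Real.sqrt (2 * a) : ℂ) *
        (∑' l : ℤ, Complex.exp (-(Real.pi * Complex.I * (starRingEnd ℂ) τ * (l : ℂ) ^ 2))) *
        (∑' k : ℤ, Complex.exp (Real.pi * Complex.I * τ * (k : ℂ) ^ 2) *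
          Complex.exp (2 * Real.pi * Complex.I * (k : ℂ) * z)) := by
  subst hτ
  have ha0 : a ≠ 0 := ha.ne'
  -- summability of the double sum (with n outer)
  have hnormsum : Summable fun q : ℤ × ℤ =>
      ‖degOneThetaTerm a ((b : ℂ) + (a : ℂ) * I) z q.2 q.1‖ := by
    have h2D := (summable2D (π * (2 * a)⁻¹) (π * a / 2) b z.re (-(π * z.im))
      (by positivity) (by positivity)).mul_right (rexp (π * (2 * a)⁻¹ * z.im ^ 2))
    refine h2D.congr fun q => ?_
    rw [term_eq a b ha0 z q.2 q.1, norm_term]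
  have hsum : Summable fun q : ℤ × ℤ => degOneThetaTerm a ((b : ℂ) + (a : ℂ) * I) z q.2 q.1 :=
    hnormsum.of_norm
  have hslice : ∀ n : ℤ, Summable fun m : ℤ => degOneThetaTerm a ((b : ℂ) + (a : ℂ) * I) z m n :=
    fun n => (((summable_prod_of_nonneg (fun q => norm_nonneg _)).mp hnormsum).1 n).of_norm
  -- summability for the G-side
  have hGnorm : Summable fun p : ℤ × ℤ => ‖cexp (Gaux a b z p.1 p.2)‖ := by
    have h2D := (summable2D (2 * π * a) (π * a / 2) (-(2 : ℝ))⁻¹ (z.im * (2 * a)⁻¹)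
      (-(π * z.im)) (by positivity) (by positivity)).mul_right (rexp (π * (2 * a)⁻¹ * z.im ^ 2))
    refine h2D.congr fun p => ?_
    rw [norm_G a b ha0 z p.1 p.2]
  have hG : Summable fun p : ℤ × ℤ => cexp (Gaux a b z p.1 p.2) := hGnorm.of_norm
  have hGslice : ∀ n : ℤ, Summable fun k : ℤ => cexp (Gaux a b z n k) :=
    fun n => (((summable_prod_of_nonneg (fun q => norm_nonneg _)).mp hGnorm).1 n).of_norm
  -- inner Poisson summation
  have hinner : ∀ n : ℤ, (∑' m : ℤ, degOneThetaTerm a ((b : ℂ) + (a : ℂ) * I) z m n)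
      = ((Real.sqrt (2 * a) : ℝ) : ℂ) * ∑' k : ℤ, cexp (Gaux a b z n k) := by
    intro n
    have hre : (0 : ℝ) < ((((2 * a)⁻¹ : ℝ) : ℂ)).re := by
      rw [Complex.ofReal_re]; positivity
    rw [tsum_congr (fun m => term_eq a b ha0 z m n), tsum_mul_right,
      Complex.tsum_exp_neg_quadratic hre (Baux a b z n), sqrt_fact a ha, mul_assoc,
      ← tsum_mul_right]
    congr 1
    refine tsum_congr fun k => ?_
    rw [← Complex.exp_add]
    refine congrArg cexp ?_
    rw [add_comm]
    exact exponent_C a b ha0 z n k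
  -- assemble
  calc (∑' p : ℤ × ℤ, degOneThetaTerm a ((b : ℂ) + (a : ℂ) * I) z p.1 p.2)
      = ∑' q : ℤ × ℤ, degOneThetaTerm a ((b : ℂ) + (a : ℂ) * I) z q.2 q.1 :=
        ((Equiv.prodComm ℤ ℤ).tsum_eq
          (f := fun p : ℤ × ℤ => degOneThetaTerm a ((b : ℂ) + (a : ℂ) * I) z p.1 p.2)).symm
    _ = ∑' n : ℤ, ∑' m : ℤ, degOneThetaTerm a ((b : ℂ) + (a : ℂ) * I) z m n :=
        Summable.tsum_prod' hsum hslice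
    _ = ∑' n : ℤ, ((Real.sqrt (2 * a) : ℝ) : ℂ) * ∑' k : ℤ, cexp (Gaux a b z n k) :=
        tsum_congr hinner
    _ = ((Real.sqrt (2 * a) : ℝ) : ℂ) * ∑' n : ℤ, ∑' k : ℤ, cexp (Gaux a b z n k) :=
        tsum_mul_left
    _ = ((Real.sqrt (2 * a) : ℝ) : ℂ) * ∑' p : ℤ × ℤ, cexp (Gaux a b z p.1 p.2) := by
        rw [Summable.tsum_prod' hG hGslice]
    _ = ((Real.sqrt (2 * a) : ℝ) : ℂ) * ∑' q : ℤ × ℤ, cexp (Gaux a b z (q.1 + q.2) q.2) := by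
        rw [← (⟨fun p => (p.1 + p.2, p.2), fun p => (p.1 - p.2, p.2),
          fun p => by simp, fun p => by simp⟩ : ℤ × ℤ ≃ ℤ × ℤ).tsum_eq
          (f := fun p : ℤ × ℤ => cexp (Gaux a b z p.1 p.2))]
        rfl
    _ = ((Real.sqrt (2 * a) : ℝ) : ℂ) * ∑' q : ℤ × ℤ,
          (cexp (-((π : ℝ) * I * (starRingEnd ℂ) ((b : ℂ) + (a : ℂ) * I) * (q.1 : ℂ) ^ 2))
            * (cexp ((π : ℝ) * I * ((b : ℂ) + (a : ℂ) * I) * (q.2 : ℂ) ^ 2)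
              * cexp (2 * (π : ℝ) * I * (q.2 : ℂ) * z))) := by
        rw [tsum_congr (fun q : ℤ × ℤ => shear_eq a b z q.1 q.2)]
    _ = ((Real.sqrt (2 * a) : ℝ) : ℂ) *
          ((∑' l : ℤ, cexp (-((π : ℝ) * I * (starRingEnd ℂ) ((b : ℂ) + (a : ℂ) * I) * (l : ℂ) ^ 2)))
            * ∑' k : ℤ, cexp ((π : ℝ) * I * ((b : ℂ) + (a : ℂ) * I) * (k : ℂ) ^ 2)
              * cexp (2 * (π : ℝ) * I * (k : ℂ) * z)) := by
        rw [tsum_mul_tsum_of_summable_norm (summable_norm_A a b ha) (summable_norm_B a b ha z)]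
    _ = _ := by rw [← mul_assoc]
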